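/- Combining the representation theorem with the Erdős box theorem: if H is a subgraph of the cube admitting a k-partite representation whose partite sets have sizes s_1, ..., s_k, then ex(Q_n, H) = O(2^n * n^(1 - δ/k)) where δ = 1/(s_1 * s_2 * ... * s_{k-1}) (assuming s_1 ≤ s_2 ≤ ... ≤ s_k). -/

import Mathlib

/-- The hypercube graph `Q n`. -/
def Q (n : ℕ) : SimpleGraph (Fin n → Bool) where
  Adj u v := hammingDist u v = 1
  symm := ⟨fun u v h => by simpa [hammingDist_comm] using h⟩
  loopless := ⟨fun u h => by simp [hammingDist_self] at h⟩

/-- The support (set of 1-coordinates) of a vertex of the hypercube.  For an edge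
`u ~ v` of the cube, `supp u ∪ supp v` is its set of non-zero bits. -/
def supp {n : ℕ} (v : Fin n → Bool) : Finset (Fin n) :=
  Finset.univ.filter fun i => v i = true

open Finset

open Classical in
/-- down-edge set of a vertex -/
noncomputable def Dset {n : ℕ} (G : SimpleGraph (Fin n → Bool)) (y : Fin n → Bool) :
    Finset (Fin n) :=
  Finset.univ.filter fun i => y i = true ∧ G.Adj (Function.update y i false) y

lemma mem_Dset {n : ℕ} {G : SimpleGraph (Fin n → Bool)} {y : Fin n → Bool} {i : Fin n} :
    i ∈ Dset G y ↔ y i = true ∧ G.Adj (Function.update y i false) y := by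
  classical
  simp [Dset]

/-- vertex above `z` obtained by switching on the coordinates of `b` -/
def Ybld {n k : ℕ} (z : Fin n → Bool) (b : Fin k → Fin n) : Fin n → Bool :=
  fun i => if i ∈ Finset.image b Finset.univ then true else z i

open Classical in
/-- the auxiliary hypergraph at base point `z` -/
noncomputable def Gz {n : ℕ} (k : ℕ) (G : SimpleGraph (Fin n → Bool)) (z : Fin n → Bool) :
    Finset (Fin k → Fin n) :=
  Finset.univ.filter fun b => (∀ t, z (b t) = false) ∧
    ∀ t, G.Adj (Function.update (Ybld z b) (b t) false) (Ybld z b)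

lemma mem_Gz {n k : ℕ} {G : SimpleGraph (Fin n → Bool)} {z : Fin n → Bool}
    {b : Fin k → Fin n} : b ∈ Gz k G z ↔ (∀ t, z (b t) = false) ∧
      ∀ t, G.Adj (Function.update (Ybld z b) (b t) false) (Ybld z b) := by
  classical
  simp [Gz]

lemma sum_Dset_card {n : ℕ} (G : SimpleGraph (Fin n → Bool)) (hG : G ≤ Q n) :
    ∑ y ∈ (univ : Finset (Fin n → Bool)), (Dset G y).card = G.edgeSet.ncard := by
  classical
  have hnc : G.edgeSet.ncard = G.edgeFinset.card := by
    rw [SimpleGraph.edgeFinset, Set.ncard_eq_toFinset_card']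
  rw [hnc]
  set S : Finset ((Fin n → Bool) × Fin n) := univ.filter (fun p => p.2 ∈ Dset G p.1) with hS
  have h1 : S.card = ∑ y ∈ (univ : Finset (Fin n → Bool)), (Dset G y).card := by
    rw [Finset.card_eq_sum_card_fiberwise (f := Prod.fst) (t := univ) (fun x _ => mem_univ _)]
    refine Finset.sum_congr rfl fun y _ => ?_
    refine Finset.card_bij (fun p _ => p.2) ?_ ?_ ?_
    · intro p hp
      show p.2 ∈ Dset G y
      simp only [hS, mem_filter, mem_univ, true_and] at hp
      rw [← hp.2]
      exact hp.1
    · intro p hp q hq hpq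
      simp only [hS, mem_filter, mem_univ, true_and] at hp hq
      exact Prod.ext (hp.2.trans hq.2.symm) hpq
    · intro i hi
      refine ⟨(y, i), ?_, rfl⟩
      rw [mem_filter]
      refine ⟨?_, rfl⟩
      rw [hS, mem_filter]
      exact ⟨mem_univ _, hi⟩
  rw [← h1]
  refine Finset.card_bij (fun p _ => s(Function.update p.1 p.2 false, p.1)) ?_ ?_ ?_
  · intro p hp
    simp only [hS, mem_filter, mem_univ, true_and] at hp
    rw [SimpleGraph.mem_edgeFinset, SimpleGraph.mem_edgeSet]
    exact (mem_Dset.1 hp).2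
  · intro p hp q hq heq
    simp only [hS, mem_filter, mem_univ, true_and] at hp hq
    rw [mem_Dset] at hp hq
    rw [Sym2.eq_iff] at heq
    rcases heq with ⟨h1', h2'⟩ | ⟨h1', h2'⟩
    · -- same orientation
      have hy : p.1 = q.1 := h2'
      have hi : p.2 = q.2 := by
        by_contra hne
        have hcf := congrFun h1' p.2
        rw [Function.update_self, Function.update_of_ne hne, ← hy] at hcf
        rw [hp.1] at hcf
        simp at hcf
      exact Prod.ext hy hi
    · -- crossed: impossible
      exfalso
      -- h1' : update p.1 p.2 false = q.1, h2' : p.1 = update q.1 q.2 false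
      have h3 : q.1 p.2 = false := by rw [← h1']; simp [Function.update_self]
      have h4 : p.1 q.2 = false := by rw [h2']; simp [Function.update_self]
      by_cases hpq : p.2 = q.2
      · rw [hpq] at h3
        simp [hq.1] at h3
      · have hcf := congrFun h1' q.2
        rw [Function.update_of_ne (Ne.symm hpq)] at hcf
        rw [h4, hq.1] at hcf
        simp at hcf
  · intro e he
    induction e using Sym2.ind with
    | _ u v =>
      rw [SimpleGraph.mem_edgeFinset, SimpleGraph.mem_edgeSet] at he
      have hQ : hammingDist u v = 1 := by have h := hG he; exact h
      rw [hammingDist] at hQ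
      obtain ⟨j₀, hj₀⟩ := Finset.card_eq_one.1 hQ
      have hne : u j₀ ≠ v j₀ := by
        have hm : j₀ ∈ ({j₀} : Finset (Fin n)) := mem_singleton_self _
        rw [← hj₀] at hm
        exact (mem_filter.1 hm).2
      have hagree : ∀ j, j ≠ j₀ → u j = v j := by
        intro j hj
        by_contra hne'
        have hm : j ∈ Finset.univ.filter (fun i => u i ≠ v i) := by simp [hne']
        rw [hj₀] at hm
        exact hj (by simpa using hm)
      cases hvj : v j₀ with
      | true =>
        have huj : u j₀ = false := by
          rw [hvj] at hne
          exact Bool.not_eq_true _ ▸ (by simpa using hne)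
        have hupd : Function.update v j₀ false = u := by
          funext j
          by_cases hj : j = j₀
          · subst hj; rw [Function.update_self, huj]
          · rw [Function.update_of_ne hj, hagree j hj]
        refine ⟨(v, j₀), ?_, ?_⟩
        · simp only [hS, mem_filter, mem_univ, true_and]
          rw [mem_Dset]
          refine ⟨hvj, ?_⟩
          rw [hupd]
          exact he
        · show s(Function.update v j₀ false, v) = s(u, v)
          rw [hupd]
      | false =>
        have huj : u j₀ = true := by
          rw [hvj] at hne
          simpa using hne
        have hupd : Function.update u j₀ false = v := by
          funext j
          by_cases hj : j = j₀
          · subst hj; rw [Function.update_self, hvj]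
          · rw [Function.update_of_ne hj, hagree j hj]
        refine ⟨(u, j₀), ?_, ?_⟩
        · simp only [hS, mem_filter, mem_univ, true_and]
          rw [mem_Dset]
          refine ⟨huj, ?_⟩
          rw [hupd]
          exact he.symm
        · show s(Function.update u j₀ false, u) = s(u, v)
          rw [hupd, Sym2.eq_swap]

/-- vertex below `y` obtained by switching off the coordinates of `b` -/
def Zbld {n k : ℕ} (y : Fin n → Bool) (b : Fin k → Fin n) : Fin n → Bool :=
  fun i => if i ∈ Finset.image b Finset.univ then false else y i

lemma sum_pow_le_sum_Gz {n : ℕ} (k : ℕ) (G : SimpleGraph (Fin n → Bool)) :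
    ∑ y ∈ (univ : Finset (Fin n → Bool)), (Dset G y).card ^ k
      ≤ ∑ z ∈ (univ : Finset (Fin n → Bool)), (Gz k G z).card := by
  classical
  set PY : Finset ((Fin n → Bool) × (Fin k → Fin n)) :=
    univ.filter (fun p => ∀ t, p.2 t ∈ Dset G p.1) with hPY
  set PZ : Finset ((Fin n → Bool) × (Fin k → Fin n)) :=
    univ.filter (fun q => q.2 ∈ Gz k G q.1) with hPZ
  have fact1 : ∀ (y : Fin n → Bool) (b : Fin k → Fin n), (∀ t, b t ∈ Dset G y) →
      Ybld (Zbld y b) b = y := by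
    intro y b hb
    funext i
    by_cases hi : i ∈ Finset.image b Finset.univ
    · obtain ⟨t, _, rfl⟩ := Finset.mem_image.1 hi
      simp only [Ybld, Zbld, if_pos hi]
      exact ((mem_Dset.1 (hb t)).1).symm
    · simp only [Ybld, Zbld, if_neg hi]
  have h1 : PY.card = ∑ y ∈ (univ : Finset (Fin n → Bool)), (Dset G y).card ^ k := by
    rw [Finset.card_eq_sum_card_fiberwise (f := Prod.fst) (t := univ) (fun x _ => mem_univ _)]
    refine Finset.sum_congr rfl fun y _ => ?_
    have hpi : (Fintype.piFinset (fun _ : Fin k => Dset G y)).card = (Dset G y).card ^ k := by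
      rw [Fintype.card_piFinset]
      simp
    rw [← hpi]
    refine Finset.card_bij (fun p _ => p.2) ?_ ?_ ?_
    · intro p hp
      show p.2 ∈ Fintype.piFinset (fun _ => Dset G y)
      simp only [hPY, mem_filter, mem_univ, true_and] at hp
      rw [Fintype.mem_piFinset]
      intro t
      rw [← hp.2]
      exact hp.1 t
    · intro p hp q hq hpq
      simp only [hPY, mem_filter, mem_univ, true_and] at hp hq
      exact Prod.ext (hp.2.trans hq.2.symm) hpq
    · intro b hb
      refine ⟨(y, b), ?_, rfl⟩
      rw [mem_filter]
      refine ⟨?_, rfl⟩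
      rw [hPY, mem_filter]
      exact ⟨mem_univ _, fun t => Fintype.mem_piFinset.1 hb t⟩
  have h2 : PZ.card = ∑ z ∈ (univ : Finset (Fin n → Bool)), (Gz k G z).card := by
    rw [Finset.card_eq_sum_card_fiberwise (f := Prod.fst) (t := univ) (fun x _ => mem_univ _)]
    refine Finset.sum_congr rfl fun z _ => ?_
    refine Finset.card_bij (fun p _ => p.2) ?_ ?_ ?_
    · intro p hp
      show p.2 ∈ Gz k G z
      simp only [hPZ, mem_filter, mem_univ, true_and] at hp
      rw [← hp.2]
      exact hp.1
    · intro p hp q hq hpq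
      simp only [hPZ, mem_filter, mem_univ, true_and] at hp hq
      exact Prod.ext (hp.2.trans hq.2.symm) hpq
    · intro b hb
      refine ⟨(z, b), ?_, rfl⟩
      rw [mem_filter]
      refine ⟨?_, rfl⟩
      rw [hPZ, mem_filter]
      exact ⟨mem_univ _, hb⟩
  rw [← h1, ← h2]
  refine Finset.card_le_card_of_injOn (fun p => (Zbld p.1 p.2, p.2)) ?_ ?_
  · intro p hp
    simp only [Finset.mem_coe, hPY, mem_filter, mem_univ, true_and] at hp
    simp only [Finset.mem_coe, hPZ, mem_filter, mem_univ, true_and]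
    rw [mem_Gz]
    constructor
    · intro t
      simp only [Zbld]
      rw [if_pos (Finset.mem_image.2 ⟨t, mem_univ t, rfl⟩)]
    · intro t
      rw [fact1 p.1 p.2 hp]
      exact (mem_Dset.1 (hp t)).2
  · intro p hp p' hp' heq
    simp only [Finset.mem_coe, hPY, mem_filter, mem_univ, true_and] at hp hp'
    have heq' : (Zbld p.1 p.2, p.2) = (Zbld p'.1 p'.2, p'.2) := heq
    rw [Prod.mk.injEq] at heq'
    obtain ⟨hz, hb⟩ := heq'
    have hy : p.1 = p'.1 := by
      rw [← fact1 p.1 p.2 hp, ← fact1 p'.1 p'.2 hp', hz, hb]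
    exact Prod.ext hy hb

lemma card_noninj_le (n k : ℕ) :
    ((univ : Finset (Fin k → Fin n)).filter fun b => ¬ Function.Injective b).card
      ≤ k * k * n ^ (k - 1) := by
  classical
  have hsub : ((univ : Finset (Fin k → Fin n)).filter fun b => ¬ Function.Injective b) ⊆
      (univ : Finset (Fin k)).offDiag.biUnion
        (fun tp => univ.filter fun b : Fin k → Fin n => b tp.1 = b tp.2) := by
    intro b hb
    rw [mem_filter] at hb
    simp only [mem_univ, true_and, Function.Injective] at hb
    push_neg at hb
    obtain ⟨t, t', heq, hne⟩ := hb
    exact Finset.mem_biUnion.2 ⟨(t, t'), by simp [Finset.mem_offDiag, hne], by simp [heq]⟩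
  refine le_trans (Finset.card_le_card hsub) (le_trans Finset.card_biUnion_le ?_)
  have hper : ∀ tp ∈ (univ : Finset (Fin k)).offDiag,
      ((univ : Finset (Fin k → Fin n)).filter fun b => b tp.1 = b tp.2).card ≤ n ^ (k - 1) := by
    intro tp htp
    have hne : tp.1 ≠ tp.2 := (Finset.mem_offDiag.1 htp).2.2
    have hinj := Finset.card_le_card_of_injOn
      (s := (univ : Finset (Fin k → Fin n)).filter fun b => b tp.1 = b tp.2)
      (f := fun b : Fin k → Fin n => (fun j : {j : Fin k // j ≠ tp.2} => b j.1))
      (t := (univ : Finset ({j : Fin k // j ≠ tp.2} → Fin n)))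
      (fun b _ => mem_univ _) ?_
    · refine le_trans hinj ?_
      rw [Finset.card_univ]
      have hcard : Fintype.card ({j : Fin k // j ≠ tp.2} → Fin n) = n ^ (k - 1) := by
        rw [Fintype.card_fun, Fintype.card_fin]
        congr 1
        rw [Fintype.card_subtype_compl, Fintype.card_subtype_eq, Fintype.card_fin]
      rw [hcard]
    · intro b hb b' hb' heq
      simp only [Finset.mem_coe, mem_filter, mem_univ, true_and] at hb hb'
      funext j
      by_cases hj : j = tp.2
      · subst hj
        rw [← hb, ← hb']
        exact congrFun heq ⟨tp.1, hne⟩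
      · exact congrFun heq ⟨j, hj⟩
  refine le_trans (Finset.sum_le_card_nsmul _ _ _ hper) ?_
  rw [smul_eq_mul, Finset.offDiag_card, Finset.card_univ, Fintype.card_fin]
  exact Nat.mul_le_mul_right _ (by omega)


lemma sub_pow_le_choose_mul (ℓ s : ℕ) : (ℓ - s)^s ≤ ℓ.choose s * s^s := by
  calc (ℓ - s)^s ≤ (ℓ + 1 - s)^s := Nat.pow_le_pow_left (by omega) s
    _ ≤ ℓ.descFactorial s := Nat.pow_sub_le_descFactorial ℓ s
    _ = s.factorial * ℓ.choose s := Nat.descFactorial_eq_factorial_mul_choose ℓ s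
    _ ≤ s^s * ℓ.choose s := Nat.mul_le_mul_right _ (Nat.factorial_le_pow s)
    _ = ℓ.choose s * s^s := Nat.mul_comm _ _

lemma pm_aux {α : Type*} (s : Finset α) (f : α → ℝ) (hf : ∀ i ∈ s, 0 ≤ f i) (m : ℕ)
    (hm : 1 ≤ m) :
    (∑ i ∈ s, f i) ^ m / (s.card : ℝ) ^ (m - 1) ≤ ∑ i ∈ s, f i ^ m := by
  obtain ⟨m, rfl⟩ := Nat.exists_eq_add_of_le hm
  simpa [Nat.add_comm] using pow_sum_div_card_le_sum_pow hf m

/-- The Erdős box theorem, tuple form. -/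
lemma box_lemma (k : ℕ) (hk : 1 ≤ k) : ∀ (s : ℕ → ℕ), (∀ i, i < k → 1 ≤ s i) →
    ∃ C : ℝ, 1 ≤ C ∧ ∀ (n : ℕ), 1 ≤ n → ∀ E : Finset (Fin k → Fin n),
      C * (n : ℝ) ^ ((k : ℝ) - 1 / ∏ i ∈ Finset.range (k - 1), (s i : ℝ)) ≤ (E.card : ℝ) →
      ∃ A : Fin k → Finset (Fin n), (∀ t, (A t).card = s (t : ℕ)) ∧
        ∀ f : Fin k → Fin n, (∀ t, f t ∈ A t) → f ∈ E := by
  induction k, hk using Nat.le_induction with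
  | base =>
    intro s hs
    refine ⟨max (s 0) 1, le_max_right _ _, ?_⟩
    intro n hn E hE
    have hexp : ((1 : ℕ) : ℝ) - 1 / ∏ i ∈ Finset.range 0, (s i : ℝ) = 0 := by simp
    rw [hexp, Real.rpow_zero, mul_one] at hE
    have h1 : s 0 ≤ E.card := by
      have : ((s 0 : ℝ)) ≤ (E.card : ℝ) := le_trans (le_max_left _ _) hE
      exact_mod_cast this
    have hinj : Function.Injective (fun e : Fin 1 → Fin n => e 0) := by
      intro e e' h
      funext t
      rw [Subsingleton.elim t 0]
      exact h
    have himg : s 0 ≤ (E.image (fun e => e 0)).card := by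
      rwa [Finset.card_image_of_injective _ hinj]
    obtain ⟨T, hT, hTcard⟩ := Finset.exists_subset_card_eq himg
    refine ⟨fun _ => T, fun t => by simpa using hTcard, ?_⟩
    intro f hf
    obtain ⟨e, he, he0⟩ := Finset.mem_image.1 (hT (hf 0))
    have : f = e := funext fun t => by rw [Subsingleton.elim t 0]; exact he0.symm
    rwa [this]
  | succ k hk IH =>
    intro s hs
    obtain ⟨C', hC'1, hC'⟩ := IH (fun i => s (i + 1)) (fun i hi => hs (i + 1) (by omega))
    set s₀ := s 0 with hs₀def
    have hs₀ : 1 ≤ s₀ := hs 0 (by omega)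
    have hs₀R : (1 : ℝ) ≤ (s₀ : ℝ) := by exact_mod_cast hs₀
    refine ⟨2 * s₀ * C', by nlinarith, ?_⟩
    intro n hn E hE
    have hxR : (1 : ℝ) ≤ (n : ℝ) := by exact_mod_cast hn
    have hx0 : (0 : ℝ) < (n : ℝ) := by linarith
    simp only [Nat.add_sub_cancel] at hE
    set Pr : ℝ := ∏ i ∈ Finset.range k, (s i : ℝ) with hPrdef
    have hPr1 : (1 : ℝ) ≤ Pr := by
      have hPrNat : 1 ≤ ∏ i ∈ Finset.range k, s i :=
        Finset.one_le_prod' fun i hi => hs i (Nat.lt_succ_of_lt (Finset.mem_range.1 hi))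
      have hcast : Pr = ((∏ i ∈ Finset.range k, s i : ℕ) : ℝ) := by
        rw [hPrdef]; push_cast; rfl
      rw [hcast]; exact_mod_cast hPrNat
    have hPr0 : (0 : ℝ) < Pr := by linarith
    set δ : ℝ := 1 / Pr with hδdef
    have hδ0 : 0 < δ := by positivity
    have hδ1 : δ ≤ 1 := by rw [hδdef]; rw [div_le_one hPr0]; exact hPr1
    set a : ℝ := ((k + 1 : ℕ) : ℝ) - δ with hadef
    -- E.card is at most n^(k+1)
    have hEub : (E.card : ℝ) ≤ (n : ℝ) ^ ((k + 1 : ℕ) : ℝ) := by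
      rw [Real.rpow_natCast]
      exact_mod_cast le_trans (Finset.card_le_univ E) (le_of_eq (by simp [Finset.card_univ]))
    -- 2 s₀ C' ≤ n
    have hCn : 2 * (s₀ : ℝ) * C' ≤ (n : ℝ) := by
      have hsplit : (n : ℝ) ^ ((k + 1 : ℕ) : ℝ) = (n : ℝ) ^ a * (n : ℝ) ^ δ := by
        rw [← Real.rpow_add hx0]; congr 1; rw [hadef]; ring
      have hpos : (0 : ℝ) < (n : ℝ) ^ a := Real.rpow_pos_of_pos hx0 a
      have h1 : 2 * (s₀ : ℝ) * C' * (n : ℝ) ^ a ≤ (n : ℝ) ^ a * (n : ℝ) ^ δ := by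
        rw [← hsplit]; exact le_trans hE hEub
      have h2 : 2 * (s₀ : ℝ) * C' ≤ (n : ℝ) ^ δ := by
        rw [mul_comm ((n:ℝ)^a) ((n:ℝ)^δ)] at h1
        exact le_of_mul_le_mul_right h1 hpos
      calc 2 * (s₀ : ℝ) * C' ≤ (n : ℝ) ^ δ := h2
        _ ≤ (n : ℝ) ^ (1 : ℝ) := Real.rpow_le_rpow_of_exponent_le hxR hδ1
        _ = (n : ℝ) := Real.rpow_one _
    have hs₀n : s₀ ≤ n := by
      have : (s₀ : ℝ) ≤ (n : ℝ) := by nlinarith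
      exact_mod_cast this
    -- links
    set L : (Fin k → Fin n) → Finset (Fin n) :=
      fun e' => univ.filter (fun x => Fin.cons x e' ∈ E) with hLdef
    have hsumL : ∑ e' ∈ (univ : Finset (Fin k → Fin n)), (L e').card = E.card := by
      rw [Finset.card_eq_sum_card_fiberwise
        (f := fun e => Fin.tail e) (t := univ) (fun x _ => mem_univ _)]
      refine Finset.sum_congr rfl fun e' _ => ?_
      refine (Finset.card_bij (fun x _ => Fin.cons x e') ?_ ?_ ?_)
      · intro x hx
        simp only [hLdef, Finset.mem_filter, Finset.mem_univ, true_and] at hx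
        simp [hx, Fin.tail_cons]
      · intro x hx x' hx' h
        have := congrFun h 0
        simpa using this
      · intro e he
        simp only [Finset.mem_filter] at he
        refine ⟨e 0, ?_, ?_⟩
        · simp only [hLdef, Finset.mem_filter, Finset.mem_univ, true_and]
          have : Fin.cons (e 0) e' = e := by rw [← he.2, Fin.cons_self_tail]
          rw [this]
          exact he.1
        · show Fin.cons (e 0) e' = e
          rw [← he.2, Fin.cons_self_tail]
    set F : (Fin k → Fin n) → ℕ := fun e' => (L e').card - s₀ with hFdef
    have hcardU : (univ : Finset (Fin k → Fin n)).card = n ^ k := by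
      simp [Finset.card_univ]
    have hFsum : E.card ≤ (∑ e' ∈ univ, F e') + s₀ * n ^ k := by
      rw [← hsumL]
      calc ∑ e' ∈ univ, (L e').card ≤ ∑ e' ∈ univ, (F e' + s₀) :=
            Finset.sum_le_sum fun e' _ => by simp only [hFdef]; omega
        _ = (∑ e' ∈ univ, F e') + s₀ * n ^ k := by
            rw [Finset.sum_add_distrib, Finset.sum_const, hcardU, smul_eq_mul, Nat.mul_comm]
    -- E.card ≥ 2 s₀ n^k
    have hak : ((k : ℕ) : ℝ) ≤ a := by rw [hadef]; push_cast; linarith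
    have hnk_le : ((n : ℝ) ^ (k : ℕ)) ≤ (n : ℝ) ^ a := by
      rw [← Real.rpow_natCast (n : ℝ) k]
      exact Real.rpow_le_rpow_of_exponent_le hxR hak
    have hEbig : 2 * (s₀ : ℝ) * ((n : ℝ) ^ (k : ℕ)) ≤ (E.card : ℝ) := by
      calc 2 * (s₀ : ℝ) * ((n : ℝ) ^ (k : ℕ)) ≤ 2 * (s₀ : ℝ) * ((n : ℝ) ^ a) := by
            have h2s : (0:ℝ) ≤ 2 * (s₀:ℝ) := by linarith
            exact mul_le_mul_of_nonneg_left hnk_le h2s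
        _ ≤ 2 * (s₀ : ℝ) * C' * ((n : ℝ) ^ a) :=
            mul_le_mul_of_nonneg_right (by nlinarith) (Real.rpow_pos_of_pos hx0 a).le
        _ ≤ (E.card : ℝ) := hE
    have hFhalf : (E.card : ℝ) / 2 ≤ ∑ e' ∈ univ, (F e' : ℝ) := by
      have hcast : (E.card : ℝ) ≤ (∑ e' ∈ univ, (F e' : ℝ)) + (s₀ : ℝ) * ((n : ℝ) ^ (k:ℕ)) := by
        exact_mod_cast hFsum
      nlinarith
    -- per-link binomial counting, summed and swapped
    set pcs := Finset.powersetCard s₀ (univ : Finset (Fin n)) with hpcsdef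
    have hswap : ∑ e' ∈ (univ : Finset (Fin k → Fin n)), (L e').card.choose s₀
        = ∑ T ∈ pcs, (univ.filter fun e' => T ⊆ L e').card := by
      calc ∑ e' ∈ (univ : Finset (Fin k → Fin n)), (L e').card.choose s₀
          = ∑ e' ∈ (univ : Finset (Fin k → Fin n)), (pcs.filter (fun T => T ⊆ L e')).card := by
            refine Finset.sum_congr rfl fun e' _ => ?_
            rw [← Finset.card_powersetCard s₀ (L e')]
            congr 1
            ext T
            simp only [Finset.mem_powersetCard, Finset.mem_filter, hpcsdef]
            constructor
            · rintro ⟨h1, h2⟩; exact ⟨⟨Finset.subset_univ T, h2⟩, h1⟩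
            · rintro ⟨⟨_, h2⟩, h1⟩; exact ⟨h1, h2⟩
        _ = ∑ T ∈ pcs, (univ.filter fun e' => T ⊆ L e').card := by
            simp only [Finset.card_filter]
            exact Finset.sum_comm
    have hpcs_card : pcs.card = n.choose s₀ := by
      rw [hpcsdef, Finset.card_powersetCard, Finset.card_univ, Fintype.card_fin]
    have hpcs_ne : pcs.Nonempty := by
      rw [← Finset.card_pos, hpcs_card]
      exact Nat.choose_pos hs₀n
    obtain ⟨T, hTpcs, hTmax⟩ :=
      Finset.exists_max_image pcs (fun T => (univ.filter fun e' => T ⊆ L e').card) hpcs_ne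
    set M := (univ.filter fun e' => T ⊆ L e').card with hMdef
    have hchoose_sum : ∑ e' ∈ (univ : Finset (Fin k → Fin n)), (L e').card.choose s₀
        ≤ n.choose s₀ * M := by
      rw [hswap]
      calc ∑ T' ∈ pcs, (univ.filter fun e' => T' ⊆ L e').card
          ≤ ∑ _T' ∈ pcs, M := Finset.sum_le_sum fun T' hT' => hTmax T' hT'
        _ = pcs.card * M := by rw [Finset.sum_const, smul_eq_mul]
        _ = n.choose s₀ * M := by rw [hpcs_card]
    -- sum of F^s₀ bounded via binomials, in ℝ
    have hFpow : ∑ e' ∈ (univ : Finset (Fin k → Fin n)), (F e' : ℝ) ^ s₀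
        ≤ (s₀ : ℝ) ^ s₀ * ((n.choose s₀ : ℝ) * (M : ℝ)) := by
      have h1 : ∑ e' ∈ (univ : Finset (Fin k → Fin n)), F e' ^ s₀
          ≤ ∑ e' ∈ (univ : Finset (Fin k → Fin n)), (L e').card.choose s₀ * s₀ ^ s₀ :=
        Finset.sum_le_sum fun e' _ => by
          simpa [hFdef] using sub_pow_le_choose_mul ((L e').card) s₀
      have h2 : ∑ e' ∈ (univ : Finset (Fin k → Fin n)), (L e').card.choose s₀ * s₀ ^ s₀
          ≤ (n.choose s₀ * M) * s₀ ^ s₀ := by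
        rw [← Finset.sum_mul]
        exact Nat.mul_le_mul_right _ hchoose_sum
      have h3 := le_trans h1 h2
      calc ∑ e' ∈ (univ : Finset (Fin k → Fin n)), (F e' : ℝ) ^ s₀
          = ((∑ e' ∈ (univ : Finset (Fin k → Fin n)), F e' ^ s₀ : ℕ) : ℝ) := by
            push_cast; rfl
        _ ≤ (((n.choose s₀ * M) * s₀ ^ s₀ : ℕ) : ℝ) := by exact_mod_cast h3
        _ = (s₀ : ℝ) ^ s₀ * ((n.choose s₀ : ℝ) * (M : ℝ)) := by push_cast; ring
    -- power mean inequality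
    have hcardR : (((univ : Finset (Fin k → Fin n)).card : ℕ) : ℝ) = ((n : ℝ)) ^ (k : ℕ) := by
      rw [hcardU]; push_cast; rfl
    have hPM : (∑ e' ∈ (univ : Finset (Fin k → Fin n)), (F e' : ℝ)) ^ s₀
        ≤ ((n : ℝ) ^ (k : ℕ)) ^ (s₀ - 1) * ∑ e' ∈ (univ : Finset (Fin k → Fin n)), (F e' : ℝ) ^ s₀ := by
      have hpm := pm_aux (univ : Finset (Fin k → Fin n)) (fun e' => (F e' : ℝ))
        (fun i _ => by positivity) s₀ hs₀
      rw [hcardR, div_le_iff₀ (by positivity)] at hpm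
      calc (∑ e' ∈ (univ : Finset (Fin k → Fin n)), (F e' : ℝ)) ^ s₀
          ≤ (∑ e' ∈ (univ : Finset (Fin k → Fin n)), (F e' : ℝ) ^ s₀) * ((n:ℝ) ^ (k:ℕ)) ^ (s₀ - 1) := hpm
        _ = ((n : ℝ) ^ (k : ℕ)) ^ (s₀ - 1) * ∑ e' ∈ (univ : Finset (Fin k → Fin n)), (F e' : ℝ) ^ s₀ := by
            ring
    -- main chain
    have h5 : (s₀ : ℝ) * C' * (n : ℝ) ^ a ≤ (E.card : ℝ) / 2 := by linarith
    have hFnonneg : (0:ℝ) ≤ ∑ e' ∈ (univ : Finset (Fin k → Fin n)), (F e' : ℝ) :=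
      Finset.sum_nonneg fun i _ => by positivity
    have h6 : ((s₀ : ℝ) * C' * (n : ℝ) ^ a) ^ s₀
        ≤ (∑ e' ∈ (univ : Finset (Fin k → Fin n)), (F e' : ℝ)) ^ s₀ := by
      apply pow_le_pow_left₀ (by positivity)
      linarith
    have hchooseR : (n.choose s₀ : ℝ) ≤ (n : ℝ) ^ (s₀ : ℕ) := by
      exact_mod_cast Nat.choose_le_pow n s₀
    have hMR : (0:ℝ) ≤ (M:ℝ) := by positivity
    have h7 : ((s₀ : ℝ) * C' * (n : ℝ) ^ a) ^ s₀
        ≤ ((n : ℝ) ^ (k : ℕ)) ^ (s₀ - 1) * ((s₀ : ℝ) ^ s₀ * ((n:ℝ) ^ (s₀:ℕ) * (M : ℝ))) := by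
      refine le_trans h6 (le_trans hPM ?_)
      have : (s₀ : ℝ) ^ s₀ * ((n.choose s₀ : ℝ) * (M : ℝ))
          ≤ (s₀ : ℝ) ^ s₀ * ((n:ℝ) ^ (s₀:ℕ) * (M : ℝ)) := by
        apply mul_le_mul_of_nonneg_left _ (by positivity)
        exact mul_le_mul_of_nonneg_right hchooseR hMR
      exact mul_le_mul_of_nonneg_left (le_trans hFpow this) (by positivity)
    -- cancel s₀^s₀
    have h8 : (s₀:ℝ) ^ s₀ * (C' ^ s₀ * ((n:ℝ) ^ a) ^ s₀)
        ≤ (s₀:ℝ) ^ s₀ * (((n : ℝ) ^ (k : ℕ)) ^ (s₀ - 1) * ((n:ℝ) ^ (s₀:ℕ) * (M : ℝ))) := by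
      calc (s₀:ℝ) ^ s₀ * (C' ^ s₀ * ((n:ℝ) ^ a) ^ s₀)
          = ((s₀ : ℝ) * C' * (n : ℝ) ^ a) ^ s₀ := by ring
        _ ≤ ((n : ℝ) ^ (k : ℕ)) ^ (s₀ - 1) * ((s₀ : ℝ) ^ s₀ * ((n:ℝ) ^ (s₀:ℕ) * (M : ℝ))) := h7
        _ = (s₀:ℝ) ^ s₀ * (((n : ℝ) ^ (k : ℕ)) ^ (s₀ - 1) * ((n:ℝ) ^ (s₀:ℕ) * (M : ℝ))) := by ring
    have h9 : C' ^ s₀ * ((n:ℝ) ^ a) ^ s₀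
        ≤ ((n : ℝ) ^ (k : ℕ)) ^ (s₀ - 1) * ((n:ℝ) ^ (s₀:ℕ) * (M : ℝ)) :=
      le_of_mul_le_mul_left h8 (by positivity)
    -- convert to rpow
    set b : ℝ := (k:ℝ) * ((s₀:ℝ) - 1) + (s₀:ℝ) with hbdef
    have e1 : ((n:ℝ) ^ a) ^ s₀ = (n:ℝ) ^ (a * (s₀:ℝ)) := by
      rw [← Real.rpow_natCast ((n:ℝ) ^ a) s₀, ← Real.rpow_mul hx0.le]
    have e2 : ((n : ℝ) ^ (k : ℕ)) ^ (s₀ - 1) * ((n:ℝ) ^ (s₀:ℕ)) = (n:ℝ) ^ b := by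
      rw [← Real.rpow_natCast (n:ℝ) k, ← Real.rpow_natCast ((n:ℝ) ^ ((k:ℕ):ℝ)) (s₀ - 1),
        ← Real.rpow_mul hx0.le, ← Real.rpow_natCast (n:ℝ) s₀, ← Real.rpow_add hx0]
      congr 1
      rw [hbdef]
      push_cast [Nat.cast_sub hs₀]
      ring
    have e3 : a * (s₀:ℝ) = b + ((k:ℝ) - δ * (s₀:ℝ)) := by
      rw [hadef, hbdef]
      push_cast
      ring
    have h10 : C' ^ s₀ * ((n:ℝ) ^ b * (n:ℝ) ^ ((k:ℝ) - δ * (s₀:ℝ))) ≤ (n:ℝ) ^ b * (M : ℝ) := by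
      rw [← Real.rpow_add hx0, ← e3]
      calc C' ^ s₀ * (n:ℝ) ^ (a * (s₀:ℝ)) = C' ^ s₀ * ((n:ℝ) ^ a) ^ s₀ := by rw [e1]
        _ ≤ ((n : ℝ) ^ (k : ℕ)) ^ (s₀ - 1) * ((n:ℝ) ^ (s₀:ℕ) * (M : ℝ)) := h9
        _ = ((n : ℝ) ^ (k : ℕ)) ^ (s₀ - 1) * ((n:ℝ) ^ (s₀:ℕ)) * (M : ℝ) := by ring
        _ = (n:ℝ) ^ b * (M : ℝ) := by rw [e2]
    have h11 : C' ^ s₀ * (n:ℝ) ^ ((k:ℝ) - δ * (s₀:ℝ)) ≤ (M : ℝ) := by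
      have := h10
      rw [show C' ^ s₀ * ((n:ℝ) ^ b * (n:ℝ) ^ ((k:ℝ) - δ * (s₀:ℝ)))
          = (n:ℝ) ^ b * (C' ^ s₀ * (n:ℝ) ^ ((k:ℝ) - δ * (s₀:ℝ))) from by ring] at this
      exact le_of_mul_le_mul_left this (Real.rpow_pos_of_pos hx0 b)
    have h12 : C' * (n:ℝ) ^ ((k:ℝ) - δ * (s₀:ℝ)) ≤ (M : ℝ) := by
      refine le_trans ?_ h11
      apply mul_le_mul_of_nonneg_right _ (Real.rpow_nonneg hx0.le _)
      exact le_self_pow₀ hC'1 (by omega)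
    -- identify the exponent with the one in IH
    set Q : ℝ := ∏ i ∈ Finset.range (k - 1), ((s (i + 1) : ℕ) : ℝ) with hQdef
    have hsplit : Pr = Q * (s₀ : ℝ) := by
      rw [hPrdef, hQdef]
      conv_lhs => rw [show k = (k - 1) + 1 from by omega]
      exact Finset.prod_range_succ' _ (k - 1)
    have hQ0 : (0:ℝ) < Q := by
      rw [hQdef]
      refine Finset.prod_pos fun i hi => ?_
      have h1 : 1 ≤ s (i + 1) := hs (i + 1) (by have := Finset.mem_range.1 hi; omega)
      exact_mod_cast Nat.lt_of_lt_of_le Nat.zero_lt_one h1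
    have hδs : (1:ℝ) / Q = δ * (s₀:ℝ) := by
      rw [hδdef, hsplit]
      have hs₀ne : (s₀:ℝ) ≠ 0 := by linarith
      field_simp
    -- apply induction hypothesis
    obtain ⟨A', hA'card, hA'mem⟩ := hC' n hn (univ.filter fun e' => T ⊆ L e')
      (by rw [hδs]; exact h12)
    refine ⟨Fin.cases T A', ?_, ?_⟩
    · intro t
      refine Fin.cases ?_ ?_ t
      · simpa using (Finset.mem_powersetCard.1 (by rwa [hpcsdef] at hTpcs)).2
      · intro i
        simpa using hA'card i
    · intro f hf
      have htail : Fin.tail f ∈ univ.filter (fun e' => T ⊆ L e') := by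
        apply hA'mem
        intro i
        have := hf i.succ
        simpa [Fin.tail] using this
      have hTL : T ⊆ L (Fin.tail f) := (Finset.mem_filter.1 htail).2
      have h0 : f 0 ∈ T := by simpa using hf 0
      have hfL : f 0 ∈ L (Fin.tail f) := hTL h0
      simp only [hLdef, Finset.mem_filter] at hfL
      have := hfL.2
      rwa [Fin.cons_self_tail] at this

/-- corollary of the main theorem and the Erdős box theorem:
if `H ≤ Q l` admits a k-partite representation with colouring `σ : [l] → [k]` whose
partite sets `σ⁻¹(i)` have sizes `s 0 ≤ s 1 ≤ ⋯ ≤ s (k-1)`, then with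
`δ = 1/(s 0 ⋯ s (k-2))` we have `ex(Q_n, H) = O(2^n n^{1 - δ/k})`: there is `C > 0`
such that for `n` large, every subgraph `G ≤ Q n` with at least `C 2^n n^{1-δ/k}` edges
contains a copy of `H`. -/
theorem cube_turan_kpartite_sizes
    (k l : ℕ) (hk : 1 ≤ k)
    (H : SimpleGraph (Fin l → Bool)) (hH : H ≤ Q l)
    (σ : Fin l → Fin k)
    (hrep : ∀ u v, H.Adj u v → (supp u ∪ supp v).card = k ∧
        Set.InjOn σ ((supp u ∪ supp v : Finset (Fin l)) : Set (Fin l)))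
    (s : ℕ → ℕ)
    (hsizes : ∀ i : Fin k, (Finset.univ.filter fun x => σ x = i).card = s (i : ℕ))
    (hmono : ∀ i j, i ≤ j → j < k → s i ≤ s j) :
    ∃ C : ℝ, 0 < C ∧ ∃ N : ℕ, ∀ n ≥ N, ∀ G : SimpleGraph (Fin n → Bool), G ≤ Q n →
      C * 2 ^ n * (n : ℝ) ^
          ((1 : ℝ) - (1 / ∏ i ∈ Finset.range (k - 1), (s i : ℝ)) / k)
        ≤ (G.edgeSet.ncard : ℝ) →
      ∃ f : (Fin l → Bool) → (Fin n → Bool), Function.Injective f ∧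
        ∀ u v, H.Adj u v → G.Adj (f u) (f v) := by
  classical
  by_cases hedge : ∃ u v, H.Adj u v
  case neg =>
    push_neg at hedge
    refine ⟨1, one_pos, l, fun n hn G hGle _ => ?_⟩
    refine ⟨fun u i => if h : (i : ℕ) < l then u ⟨(i : ℕ), h⟩ else false, ?_, ?_⟩
    · intro u u' huu
      funext j
      have hlt : (j : ℕ) < n := lt_of_lt_of_le j.2 (by omega)
      have hcf := congrFun huu ⟨(j : ℕ), hlt⟩
      simp only at hcf
      rw [dif_pos (show ((⟨(j : ℕ), hlt⟩ : Fin n) : ℕ) < l from j.2),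
        dif_pos (show ((⟨(j : ℕ), hlt⟩ : Fin n) : ℕ) < l from j.2)] at hcf
      simpa using hcf
    · intro u v huv
      exact absurd huv (hedge u v)
  case pos =>
  obtain ⟨u₀, v₀, hA₀⟩ := hedge
  -- every colour class is nonempty
  have hspos : ∀ i, i < k → 1 ≤ s i := by
    intro i hi
    obtain ⟨hcard₀, hinj₀⟩ := hrep u₀ v₀ hA₀
    have himg : (supp u₀ ∪ supp v₀).image σ = (Finset.univ : Finset (Fin k)) := by
      apply Finset.eq_univ_of_card
      rw [Finset.card_image_of_injOn hinj₀, hcard₀, Fintype.card_fin]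
    have hmem : (⟨i, hi⟩ : Fin k) ∈ (supp u₀ ∪ supp v₀).image σ := by
      rw [himg]; exact Finset.mem_univ _
    obtain ⟨j, _, hj2⟩ := Finset.mem_image.1 hmem
    have hone : 1 ≤ (Finset.univ.filter fun x => σ x = (⟨i, hi⟩ : Fin k)).card :=
      Finset.card_pos.2 ⟨j, by simp [hj2]⟩
    rw [hsizes ⟨i, hi⟩] at hone
    exact hone
  obtain ⟨Cb, hCb1, hbox⟩ := box_lemma k hk s hspos
  set δ : ℝ := 1 / ∏ i ∈ Finset.range (k - 1), (s i : ℝ) with hδdef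
  have hPr1 : (1 : ℝ) ≤ ∏ i ∈ Finset.range (k - 1), (s i : ℝ) := by
    have hPrNat : 1 ≤ ∏ i ∈ Finset.range (k - 1), s i :=
      Finset.one_le_prod' fun i hi => hspos i (by have := Finset.mem_range.1 hi; omega)
    have hcast : ∏ i ∈ Finset.range (k - 1), (s i : ℝ)
        = ((∏ i ∈ Finset.range (k - 1), s i : ℕ) : ℝ) := by push_cast; rfl
    rw [hcast]; exact_mod_cast hPrNat
  have hδ0 : 0 < δ := by rw [hδdef]; positivity
  have hδ1 : δ ≤ 1 := by rw [hδdef, div_le_one (by linarith)]; exact hPr1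
  set C : ℝ := Cb + (k : ℝ) * k + 1 with hCdef
  have hk0R : (0 : ℝ) < (k : ℝ) := by exact_mod_cast hk
  have hC1 : 1 ≤ C := by rw [hCdef]; nlinarith
  refine ⟨C, by linarith, k + l + 1, fun n hn G hGle hcard => ?_⟩
  have hn1 : 1 ≤ n := by omega
  have hxR : (1 : ℝ) ≤ (n : ℝ) := by exact_mod_cast hn1
  have hx0 : (0 : ℝ) < (n : ℝ) := by linarith
  set W : ℝ := (2 : ℝ) ^ n with hWdef
  have hW0 : 0 < W := by rw [hWdef]; positivity
  set eG : ℝ := (G.edgeSet.ncard : ℝ) with heGdef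
  have heG0 : (0 : ℝ) ≤ eG := by rw [heGdef]; positivity
  have hsum_d : ∑ y ∈ (Finset.univ : Finset (Fin n → Bool)), ((Dset G y).card : ℝ) = eG := by
    rw [heGdef, ← sum_Dset_card G hGle]
    push_cast
    rfl
  have hcardU2 : (((Finset.univ : Finset (Fin n → Bool)).card : ℕ) : ℝ) = W := by
    have hcu : Fintype.card (Fin n → Bool) = 2 ^ n := by simp
    rw [Finset.card_univ, hcu, hWdef]
    push_cast
    ring
  have hPM : eG ^ k / W ^ (k - 1)
      ≤ ∑ y ∈ (Finset.univ : Finset (Fin n → Bool)), ((Dset G y).card : ℝ) ^ k := by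
    have hpm := pm_aux (Finset.univ : Finset (Fin n → Bool)) (fun y => ((Dset G y).card : ℝ))
      (fun i _ => by positivity) k hk
    rw [hcardU2, hsum_d] at hpm
    exact hpm
  have hcast2 : ∑ y ∈ (Finset.univ : Finset (Fin n → Bool)), ((Dset G y).card : ℝ) ^ k
      ≤ ∑ z ∈ (Finset.univ : Finset (Fin n → Bool)), ((Gz k G z).card : ℝ) := by
    exact_mod_cast sum_pow_le_sum_Gz k G
  obtain ⟨z, _, hzmax⟩ := Finset.exists_max_image (Finset.univ : Finset (Fin n → Bool))
    (fun z => (Gz k G z).card) Finset.univ_nonempty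
  have hzbig : eG ^ k / W ^ (k - 1) ≤ W * ((Gz k G z).card : ℝ) := by
    have hsum_le : ∑ z' ∈ (Finset.univ : Finset (Fin n → Bool)), ((Gz k G z').card : ℝ)
        ≤ W * ((Gz k G z).card : ℝ) := by
      calc ∑ z' ∈ (Finset.univ : Finset (Fin n → Bool)), ((Gz k G z').card : ℝ)
          ≤ ∑ _z' ∈ (Finset.univ : Finset (Fin n → Bool)), ((Gz k G z).card : ℝ) :=
            Finset.sum_le_sum fun z' _ => by exact_mod_cast hzmax z' (Finset.mem_univ z')
        _ = W * ((Gz k G z).card : ℝ) := by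
            rw [Finset.sum_const, nsmul_eq_mul, hcardU2]
    linarith
  have hkR0 : (k : ℝ) ≠ 0 := by positivity
  have hrpow1 : ((n : ℝ) ^ ((1 : ℝ) - δ / k)) ^ (k : ℕ) = (n : ℝ) ^ ((k : ℝ) - δ) := by
    rw [← Real.rpow_natCast ((n : ℝ) ^ ((1 : ℝ) - δ / (k : ℝ))) k, ← Real.rpow_mul hx0.le]
    congr 1
    field_simp
  have hGzbig : C ^ k * (n : ℝ) ^ ((k : ℝ) - δ) ≤ ((Gz k G z).card : ℝ) := by
    have h2 : (C * W * (n : ℝ) ^ ((1 : ℝ) - δ / k)) ^ (k : ℕ) ≤ eG ^ k :=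
      pow_le_pow_left₀ (by positivity) hcard k
    have h3 : (C * W * (n : ℝ) ^ ((1 : ℝ) - δ / k)) ^ (k : ℕ)
        = C ^ k * W ^ k * (n : ℝ) ^ ((k : ℝ) - δ) := by
      rw [mul_pow, mul_pow, hrpow1]
    have hWk : W ^ k = W ^ (k - 1) * W := by
      rw [← pow_succ]
      congr 1
      omega
    have hzbig' : eG ^ k ≤ W ^ (k - 1) * (W * ((Gz k G z).card : ℝ)) := by
      rw [div_le_iff₀ (by positivity)] at hzbig
      linarith
    have hkey : W ^ (k - 1) * W * (C ^ k * (n : ℝ) ^ ((k : ℝ) - δ))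
        ≤ W ^ (k - 1) * W * ((Gz k G z).card : ℝ) := by
      calc W ^ (k - 1) * W * (C ^ k * (n : ℝ) ^ ((k : ℝ) - δ))
          = C ^ k * W ^ k * (n : ℝ) ^ ((k : ℝ) - δ) := by rw [hWk]; ring
        _ = (C * W * (n : ℝ) ^ ((1 : ℝ) - δ / k)) ^ (k : ℕ) := h3.symm
        _ ≤ eG ^ k := h2
        _ ≤ W ^ (k - 1) * (W * ((Gz k G z).card : ℝ)) := hzbig'
        _ = W ^ (k - 1) * W * ((Gz k G z).card : ℝ) := by ring
    exact le_of_mul_le_mul_left hkey (by positivity)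
  set E : Finset (Fin k → Fin n) := (Gz k G z).filter Function.Injective with hEdef
  have hEcard : Cb * (n : ℝ) ^ ((k : ℝ) - δ) ≤ (E.card : ℝ) := by
    have hsplitF : Gz k G z = E ∪ (Gz k G z).filter (fun b => ¬ Function.Injective b) := by
      rw [hEdef, Finset.filter_union_filter_not_eq]
    have hsplit : (Gz k G z).card ≤ E.card + k * k * n ^ (k - 1) := by
      calc (Gz k G z).card
          ≤ E.card + ((Gz k G z).filter (fun b => ¬ Function.Injective b)).card := by
            conv_lhs => rw [hsplitF]
            exact Finset.card_union_le _ _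
        _ ≤ E.card + k * k * n ^ (k - 1) := by
            refine Nat.add_le_add_left ?_ _
            refine le_trans (Finset.card_le_card ?_) (card_noninj_le n k)
            exact Finset.filter_subset_filter _ (Finset.subset_univ _)
    have hnk1 : ((n : ℝ)) ^ (k - 1 : ℕ) ≤ (n : ℝ) ^ ((k : ℝ) - δ) := by
      rw [← Real.rpow_natCast (n : ℝ) (k - 1)]
      apply Real.rpow_le_rpow_of_exponent_le hxR
      rw [Nat.cast_sub hk]
      push_cast
      linarith
    have hC_k : Cb + (k : ℝ) * k ≤ C ^ k := by
      have hCk : C ≤ C ^ k := le_self_pow₀ hC1 (by omega)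
      rw [hCdef] at hCk
      linarith
    have hcast3 : ((Gz k G z).card : ℝ) ≤ (E.card : ℝ) + (k : ℝ) * k * ((n : ℝ)) ^ (k - 1 : ℕ) := by
      exact_mod_cast hsplit
    have hnn : (0 : ℝ) ≤ (n : ℝ) ^ ((k : ℝ) - δ) := Real.rpow_nonneg hx0.le _
    have hmulk : (k : ℝ) * k * ((n : ℝ)) ^ (k - 1 : ℕ) ≤ (k : ℝ) * k * (n : ℝ) ^ ((k : ℝ) - δ) :=
      mul_le_mul_of_nonneg_left hnk1 (by positivity)
    have hfin : Cb * (n : ℝ) ^ ((k : ℝ) - δ)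
        ≤ (C ^ k - (k : ℝ) * k) * (n : ℝ) ^ ((k : ℝ) - δ) :=
      mul_le_mul_of_nonneg_right (by linarith) hnn
    nlinarith
  obtain ⟨A, hAcard, hAmem⟩ := hbox n hn1 E hEcard
  -- parts are nonempty
  have hApos : ∀ t : Fin k, (A t).Nonempty := fun t =>
    Finset.card_pos.1 (by rw [hAcard t]; exact hspos (t : ℕ) t.2)
  choose pick hpick using hApos
  -- parts are pairwise disjoint
  have hdisj : ∀ t t' : Fin k, t ≠ t' → ∀ x, x ∈ A t → x ∈ A t' → False := by
    intro t t' hne x hxt hxt'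
    set f : Fin k → Fin n := fun r => if r = t ∨ r = t' then x else pick r with hfd
    have hmem : ∀ r, f r ∈ A r := by
      intro r
      by_cases hr : r = t ∨ r = t'
      · rcases hr with rfl | rfl
        · simpa [hfd] using hxt
        · simpa [hfd] using hxt'
      · rw [hfd]
        simp only
        rw [if_neg hr]
        exact hpick r
    have hfinj : Function.Injective f := (Finset.mem_filter.1 (hAmem f hmem)).2
    exact hne (hfinj (by simp [hfd]))
  -- z vanishes on all parts
  have hzA : ∀ t : Fin k, ∀ x ∈ A t, z x = false := by
    intro t x hx
    set f : Fin k → Fin n := fun r => if r = t then x else pick r with hfd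
    have hmem : ∀ r, f r ∈ A r := by
      intro r
      by_cases hr : r = t
      · subst hr; simpa [hfd] using hx
      · rw [hfd]; simp only; rw [if_neg hr]; exact hpick r
    have hfGz : f ∈ Gz k G z := (Finset.mem_filter.1 (hAmem f hmem)).1
    have hzf := (mem_Gz.1 hfGz).1 t
    simpa [hfd] using hzf
  -- build the coordinate embedding a : Fin l → Fin n
  set fib : Fin k → Finset (Fin l) := fun t => Finset.univ.filter fun j => σ j = t with hfib
  have hfibmem : ∀ j : Fin l, j ∈ fib (σ j) := fun j => by simp [hfib]
  have hgex : ∀ t : Fin k, ∃ g : Fin l → Fin n,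
      Set.InjOn g (fib t) ∧ ∀ j ∈ fib t, g j ∈ A t := by
    intro t
    have hcardeq : Fintype.card (fib t) = Fintype.card (A t) := by
      rw [Fintype.card_coe, Fintype.card_coe, hAcard t]
      exact hsizes t
    set e := Fintype.equivOfCardEq hcardeq with hedef
    refine ⟨fun j => if hj : j ∈ fib t then (e ⟨j, hj⟩ : A t).1 else pick t, ?_, ?_⟩
    · intro j hj j' hj' heq
      have hj1 : j ∈ fib t := Finset.mem_coe.1 hj
      have hj1' : j' ∈ fib t := Finset.mem_coe.1 hj'
      simp only [dif_pos hj1, dif_pos hj1'] at heq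
      have hsub : e ⟨j, hj1⟩ = e ⟨j', hj1'⟩ := Subtype.ext heq
      have := e.injective hsub
      exact congrArg Subtype.val this
    · intro j hj
      simp only [dif_pos hj]
      exact (e ⟨j, hj⟩).2
  choose g hginj hgmem using hgex
  set a : Fin l → Fin n := fun j => g (σ j) j with hadef
  have hamem : ∀ j, a j ∈ A (σ j) := fun j => hgmem (σ j) j (hfibmem j)
  have hainj : Function.Injective a := by
    intro j j' heq
    by_cases hσ : σ j = σ j'
    · have hjf : j' ∈ fib (σ j) := by rw [hσ]; exact hfibmem j'
      rw [hadef] at heq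
      simp only at heq
      rw [← hσ] at heq
      exact hginj (σ j) (Finset.mem_coe.2 (hfibmem j)) (Finset.mem_coe.2 hjf) heq
    · exfalso
      exact hdisj (σ j) (σ j') hσ (a j) (hamem j) (by rw [heq]; exact hamem j')
  have hza : ∀ j, z (a j) = false := fun j => hzA (σ j) (a j) (hamem j)
  -- the vertex embedding
  set F : (Fin l → Bool) → (Fin n → Bool) :=
    fun u i => if i ∈ (supp u).image a then true else z i with hFd
  have hFval : ∀ (u : Fin l → Bool) (j : Fin l), F u (a j) = u j := by
    intro u j
    by_cases hj : u j = true
    · rw [hFd]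
      simp only
      rw [if_pos (Finset.mem_image.2 ⟨j, by simp [supp, hj], rfl⟩), hj]
    · have hj' : u j = false := by revert hj; cases u j <;> simp
      rw [hFd]
      simp only
      rw [if_neg, hza j, hj']
      intro hmem
      obtain ⟨j', hj'mem, hj'eq⟩ := Finset.mem_image.1 hmem
      have hjj : j' = j := hainj hj'eq
      subst hjj
      simp only [supp, Finset.mem_filter, Finset.mem_univ, true_and] at hj'mem
      exact hj hj'mem
  have hFinj : Function.Injective F := by
    intro u u' heq
    funext j
    have hcf := congrFun heq (a j)
    rw [hFval, hFval] at hcf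
    exact hcf
  refine ⟨F, hFinj, ?_⟩
  have hclaim : ∀ u v : Fin l → Bool, H.Adj u v → ∀ j₀ : Fin l, u j₀ = false → v j₀ = true →
      (∀ j, j ≠ j₀ → u j = v j) → G.Adj (F u) (F v) := by
    intro u v hAdj j₀ hu0 hv1 hagree
    obtain ⟨hcardk, hinjk⟩ := hrep u v hAdj
    have hsubuv : supp u ⊆ supp v := by
      intro j hj
      simp only [supp, Finset.mem_filter, Finset.mem_univ, true_and] at hj ⊢
      by_cases hjj : j = j₀
      · subst hjj
        rw [hu0] at hj
        exact absurd hj (by simp)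
      · rw [← hagree j hjj]
        exact hj
    have huniv : supp u ∪ supp v = supp v := Finset.union_eq_right.2 hsubuv
    rw [huniv] at hcardk hinjk
    have hj₀v : j₀ ∈ supp v := by simp [supp, hv1]
    have himgv : (supp v).image σ = (Finset.univ : Finset (Fin k)) := by
      apply Finset.eq_univ_of_card
      rw [Finset.card_image_of_injOn hinjk, hcardk, Fintype.card_fin]
    have hτex : ∀ t : Fin k, ∃ j, j ∈ supp v ∧ σ j = t := by
      intro t
      have : t ∈ (supp v).image σ := by rw [himgv]; exact Finset.mem_univ t
      obtain ⟨j, hj1, hj2⟩ := Finset.mem_image.1 this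
      exact ⟨j, hj1, hj2⟩
    choose τ hτmem hτσ using hτex
    set b : Fin k → Fin n := fun t => a (τ t) with hbd
    have hbmem : ∀ t, b t ∈ A t := fun t => by
      have hmm := hamem (τ t)
      rw [hτσ t] at hmm
      rw [hbd]
      exact hmm
    have hbE := hAmem b hbmem
    have hbGz : b ∈ Gz k G z := (Finset.mem_filter.1 hbE).1
    obtain ⟨hbz, hbadj⟩ := mem_Gz.1 hbGz
    have himgb : Finset.image b Finset.univ = (supp v).image a := by
      apply Finset.Subset.antisymm
      · intro x hx
        obtain ⟨t, _, rfl⟩ := Finset.mem_image.1 hx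
        exact Finset.mem_image.2 ⟨τ t, hτmem t, rfl⟩
      · intro x hx
        obtain ⟨j, hj, rfl⟩ := Finset.mem_image.1 hx
        have hjτ : τ (σ j) = j :=
          hinjk (Finset.mem_coe.2 (hτmem (σ j))) (Finset.mem_coe.2 hj) (hτσ (σ j))
        refine Finset.mem_image.2 ⟨σ j, Finset.mem_univ _, ?_⟩
        rw [hbd]
        simp only
        rw [hjτ]
    have hFv : Ybld z b = F v := by
      funext i
      rw [Ybld, hFd]
      simp only
      rw [himgb]
    have hsuppu : supp u = (supp v).erase j₀ := by
      ext j
      simp only [supp, Finset.mem_filter, Finset.mem_univ, true_and, Finset.mem_erase]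
      constructor
      · intro hj
        have hjj : j ≠ j₀ := by
          intro h
          subst h
          rw [hu0] at hj
          exact absurd hj (by simp)
        exact ⟨hjj, by rw [← hagree j hjj]; exact hj⟩
      · rintro ⟨hjj, hjv⟩
        rw [hagree j hjj]
        exact hjv
    have hFu : Function.update (F v) (a j₀) false = F u := by
      funext i
      by_cases hi : i = a j₀
      · subst hi
        rw [Function.update_self, hFval u j₀, hu0]
      · rw [Function.update_of_ne hi]
        rw [hFd]
        simp only
        have himgu : (supp u).image a = ((supp v).image a).erase (a j₀) := by
          rw [hsuppu, Finset.image_erase hainj]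
        rw [himgu]
        congr 1
        rw [eq_iff_iff]
        simp [Finset.mem_erase, hi]
    have ht₀ : τ (σ j₀) = j₀ :=
      hinjk (Finset.mem_coe.2 (hτmem (σ j₀))) (Finset.mem_coe.2 hj₀v) (hτσ (σ j₀))
    have hadj := hbadj (σ j₀)
    rw [hFv] at hadj
    have hbt₀ : b (σ j₀) = a j₀ := by
      rw [hbd]
      simp only
      rw [ht₀]
    rw [hbt₀, hFu] at hadj
    exact hadj
  intro u v hAdj
  have hQadj : hammingDist u v = 1 := by have h := hH hAdj; exact h
  rw [hammingDist] at hQadj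
  obtain ⟨j₀, hj₀⟩ := Finset.card_eq_one.1 hQadj
  have hne : u j₀ ≠ v j₀ := by
    have hm : j₀ ∈ ({j₀} : Finset (Fin l)) := Finset.mem_singleton_self _
    rw [← hj₀] at hm
    exact (Finset.mem_filter.1 hm).2
  have hagree : ∀ j, j ≠ j₀ → u j = v j := by
    intro j hj
    by_contra hne2
    have hm : j ∈ Finset.univ.filter (fun i => u i ≠ v i) := by simp [hne2]
    rw [hj₀] at hm
    exact hj (by simpa using hm)
  cases hvj : v j₀ with
  | true =>
    have huj : u j₀ = false := by
      rw [hvj] at hne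
      simpa using hne
    exact hclaim u v hAdj j₀ huj hvj hagree
  | false =>
    have huj : u j₀ = true := by
      rw [hvj] at hne
      simpa using hne
    exact G.adj_symm (hclaim v u (H.adj_symm hAdj) j₀ hvj huj (fun j hj => (hagree j hj).symm))
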